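/- Let 𝔞 be a nonzero ideal of the ring of integers O of a number field K, and suppose that N(𝔞) = min(ℤ_{≥1} ∩ 𝔞), i.e. the absolute norm of 𝔞 equals the smallest positive rational integer contained in 𝔞. Then O/𝔞 is isomorphic as a ring to ℤ/N(𝔞)ℤ, i.e. there is a ring isomorphism O ⧸ 𝔞 ≃+* ZMod (N(𝔞)), induced by the canonical map ℤ → O/𝔞 (so O/𝔞 is generated by 1). -/

import Mathlib

open NumberField

set_option synthInstance.maxHeartbeats 1000000
set_option maxHeartbeats 1000000

theorem stmt_19 (K : Type*) [Field K] [NumberField K]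
    (𝔞 : Ideal (RingOfIntegers K)) (h𝔞 : 𝔞 ≠ ⊥)
    (hmin : Ideal.absNorm 𝔞 = sInf {n : ℕ | 0 < n ∧ (n : RingOfIntegers K) ∈ 𝔞}) :
    ∃ e : (RingOfIntegers K ⧸ 𝔞) ≃+* ZMod (Ideal.absNorm 𝔞),
      ∀ n : ℤ, e (n : RingOfIntegers K ⧸ 𝔞) = (n : ZMod (Ideal.absNorm 𝔞)) := by
  set O := RingOfIntegers K
  set N := Ideal.absNorm 𝔞 with hN
  have hNpos : 0 < N := Nat.pos_of_ne_zero (by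
    simp [hN, Ideal.absNorm_eq_zero_iff, h𝔞])
  have hNmem : (N : O) ∈ 𝔞 := by
    simpa [hN] using Ideal.absNorm_mem 𝔞
  -- key: (a : O) ∈ 𝔞 ↔ N ∣ a
  have key : ∀ a : ℕ, (a : O) ∈ 𝔞 ↔ N ∣ a := by
    intro a
    constructor
    · intro ha
      have hr : ((a % N : ℕ) : O) ∈ 𝔞 := by
        have h2 : ((N * (a / N) : ℕ) : O) ∈ 𝔞 := by
          push_cast
          convert Ideal.mul_mem_right ((a / N : ℕ) : O) 𝔞 hNmem using 1
          exact Nat.cast_mul _ _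
        have heq : ((a % N : ℕ) : O) = (a : O) - ((N * (a / N) : ℕ) : O) := by
          rw [eq_sub_iff_add_eq, ← Nat.cast_add, Nat.mod_add_div]
        rw [heq]
        exact Ideal.sub_mem 𝔞 ha h2
      rcases Nat.eq_zero_or_pos (a % N) with h0 | hpos
      · exact Nat.dvd_of_mod_eq_zero h0
      · exfalso
        have hle : N ≤ a % N :=
          le_trans (le_of_eq hmin) (Nat.sInf_le ⟨hpos, hr⟩)
        exact absurd (Nat.mod_lt a hNpos) (not_lt.2 hle)
    · rintro ⟨c, rfl⟩
      push_cast
      convert Ideal.mul_mem_right (c : O) 𝔞 hNmem using 1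
  have hchar : CharP (O ⧸ 𝔞) N := by
    constructor
    intro a
    rw [← map_natCast (Ideal.Quotient.mk 𝔞) a, Ideal.Quotient.eq_zero_iff_mem, key]
  haveI : Fintype (O ⧸ 𝔞) := @Fintype.ofFinite _ (Ideal.finiteQuotientOfFreeOfNeBot 𝔞 h𝔞)
  have hcard : Fintype.card (O ⧸ 𝔞) = N := by
    rw [hN, Ideal.absNorm_apply, Submodule.cardQuot_apply, Nat.card_eq_fintype_card]
  have hbij := ZMod.castHom_bijective (O ⧸ 𝔞) hcard
  let f : ZMod N ≃+* (O ⧸ 𝔞) := RingEquiv.ofBijective _ hbij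
  refine ⟨f.symm, fun n => ?_⟩
  have : f (n : ZMod N) = (n : O ⧸ 𝔞) := map_intCast f.toRingHom n
  rw [← this, RingEquiv.symm_apply_apply]
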